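/- Let E be a metric space, (X_n) E-valued random variables on a probability space (Ω,F,P), G ⊂ F a sub-σ-field, and X an E-valued random variable on an extension (Ω̂,F̂,P̂). Then the following are equivalent: (1) E[f(X_n)Y] → Ê[f(X)Y] for all bounded continuous f and all bounded G-measurable Y; (2) the same convergence holds for all bounded uniformly continuous f and bounded G-measurable Y; (3) limsup_n E[1_{X_n∈F}Y] ≤ Ê[1_{X∈F}Y] for all closed sets F and all bounded nonnegative G-measurable Y; (4) Ê[1_{X∈G'}Y] ≤ liminf_n E[1_{X_n∈G'}Y] for all open sets G' and all bounded nonnegative G-measurable Y. -/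

import Mathlib

open MeasureTheory ProbabilityTheory Filter Real Set Topology
open scoped NNReal ENNReal

noncomputable section

/-- The discretization map of the regular partition with mesh `1/n`. -/
def eta (n : ℕ) (t : ℝ) : ℝ := (⌊t * n⌋ : ℝ) / n

/-- A real-valued standard Brownian motion with respect to a filtration `F`. -/
structure IsBM {Ω : Type*} [MeasurableSpace Ω] (P : Measure Ω)
    (F : ℝ → MeasurableSpace Ω) (W : ℝ → Ω → ℝ) : Prop where
  adapted : ∀ t : ℝ, Measurable[F t] (W t)
  cont : ∀ ω, Continuous fun t => W t ω
  init : ∀ ω, W 0 ω = 0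
  gauss : ∀ s t : ℝ, 0 ≤ s → s ≤ t →
    P.map (fun ω => W t ω - W s ω) = gaussianReal 0 (Real.toNNReal (t - s))
  indep : ∀ s t : ℝ, 0 ≤ s → s ≤ t →
    Indep (MeasurableSpace.comap (fun ω => W t ω - W s ω) inferInstance) (F s) P

/-- An abstract Itô-type stochastic integral operator `si f a b = ∫_a^b f_s dV_s`
with respect to an integrator `V` and a filtration `F`. -/
structure SIop (Ω : Type*) [MeasurableSpace Ω] (P : Measure Ω)
    (F : ℝ → MeasurableSpace Ω) (V : ℝ → Ω → ℝ) where
  si : (ℝ → Ω → ℝ) → ℝ → ℝ → Ω → ℝ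
  si_meas : ∀ f a b, Measurable (si f a b)
  si_add : ∀ f (a b c : ℝ), a ≤ b → b ≤ c →
    ∀ᵐ ω ∂P, si f a c ω = si f a b ω + si f b c ω
  si_const : ∀ (ξ : Ω → ℝ) (a b : ℝ), Measurable[F a] ξ →
    ∀ᵐ ω ∂P, si (fun _ => ξ) a b ω = ξ ω * (V b ω - V a ω)
  si_linear : ∀ f g (a b : ℝ), ∀ᵐ ω ∂P,
    si (fun s ω => f s ω + g s ω) a b ω = si f a b ω + si g a b ω

/-- The predictable σ-field on `ℝ × Ω` associated with the filtration `F`. -/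
def predSigma {Ω : Type*} (F : ℝ → MeasurableSpace Ω) : MeasurableSpace (ℝ × Ω) :=
  MeasurableSpace.generateFrom
    {u | ∃ (s t : ℝ) (A : Set Ω), s < t ∧ MeasurableSet[F s] A ∧ u = Set.Ioc s t ×ˢ A}

/-- A process is predictable if it is measurable with respect to the predictable σ-field. -/
def Predictable {Ω : Type*} (F : ℝ → MeasurableSpace Ω) (f : ℝ → Ω → ℝ) : Prop :=
  Measurable[predSigma F] fun p => f p.1 p.2

/-- The natural filtration `σ(W_s : 0 ≤ s ≤ t)` of a single process. -/
def filtOf {Ω : Type*} (W : ℝ → Ω → ℝ) (t : ℝ) : MeasurableSpace Ω :=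
  ⨆ s ∈ Set.Icc (0:ℝ) t, MeasurableSpace.comap (W s) inferInstance

/-- The natural filtration generated by a family of processes. -/
def filtOfFam {Ω ι : Type*} (W : ι → ℝ → Ω → ℝ) (t : ℝ) : MeasurableSpace Ω :=
  ⨆ i, filtOf (W i) t

/-- `G`-stable convergence in law of `X n` to `Xl`, the latter defined on an
extension `Ω × Ω₀` of the original probability space. -/
def StableConvTo {Ω Ω₀ E : Type*} [MeasurableSpace Ω] [MeasurableSpace Ω₀]
    [PseudoMetricSpace E] (P : Measure Ω) (G : MeasurableSpace Ω)
    (X : ℕ → Ω → E) (Phat : Measure (Ω × Ω₀)) (Xl : Ω × Ω₀ → E) : Prop :=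
  ∀ f : E → ℝ, Continuous f → (∃ C, ∀ x, |f x| ≤ C) →
  ∀ Y : Ω → ℝ, Measurable[G] Y → (∃ C, ∀ ω, |Y ω| ≤ C) →
    Tendsto (fun n => ∫ ω, f (X n ω) * Y ω ∂P) atTop
      (𝓝 (∫ p, f (Xl p) * Y p.1 ∂Phat))

namespace StableAux

variable {α : Type*} [MeasurableSpace α]

lemma integrable_of_bdd {μ : Measure α} [IsFiniteMeasure μ] {g : α → ℝ}
    (hg : AEStronglyMeasurable g μ) {C : ℝ} (hC : ∀ x, |g x| ≤ C) : Integrable g μ :=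
  (integrable_const C).mono' hg (ae_of_all _ fun x => by
    simpa [Real.norm_eq_abs] using hC x)

lemma abs_integral_le_of_bdd {μ : Measure α} [IsProbabilityMeasure μ] {g : α → ℝ}
    {C : ℝ} (hC : ∀ x, |g x| ≤ C) : |∫ x, g x ∂μ| ≤ C := by
  have := norm_integral_le_of_norm_le_const (μ := μ) (f := g) (C := C)
    (ae_of_all _ fun x => by simpa [Real.norm_eq_abs] using hC x)
  simpa [Real.norm_eq_abs] using this

lemma integral_wd {E : Type*} [MeasurableSpace E] {μ : Measure α}
    {Y : α → ℝ} (hY : Measurable Y) (hY0 : ∀ ω, 0 ≤ Y ω)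
    {X : α → E} (hX : Measurable X) {g : E → ℝ} (hg : Measurable g) :
    ∫ x, g x ∂((μ.withDensity (fun ω => ENNReal.ofReal (Y ω))).map X)
      = ∫ ω, g (X ω) * Y ω ∂μ := by
  rw [integral_map hX.aemeasurable hg.aestronglyMeasurable]
  have h : (fun ω => ENNReal.ofReal (Y ω)) = fun ω => ((Real.toNNReal (Y ω) : ℝ≥0) : ℝ≥0∞) := rfl
  rw [h, integral_withDensity_eq_integral_smul (f := fun ω => (Y ω).toNNReal) (measurable_real_toNNReal.comp hY)]
  congr 1; funext ω
  simp [NNReal.smul_def, Real.coe_toNNReal _ (hY0 ω), mul_comm]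

lemma measure_wd {E : Type*} [MeasurableSpace E] {μ : Measure α}
    {Y : α → ℝ} (hY : Measurable Y) (hY0 : ∀ ω, 0 ≤ Y ω)
    {X : α → E} (hX : Measurable X) {S : Set E} (hS : MeasurableSet S) :
    (((μ.withDensity (fun ω => ENNReal.ofReal (Y ω))).map X) S).toReal
      = ∫ ω, S.indicator (fun _ => (1:ℝ)) (X ω) * Y ω ∂μ := by
  rw [← integral_wd hY hY0 hX (measurable_const.indicator hS)]
  exact (integral_indicator_one hS).symm

lemma isProb_wd {E : Type*} [MeasurableSpace E] {μ : Measure α} [IsProbabilityMeasure μ]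
    {Y : α → ℝ} (hY : Measurable Y) (hY0 : ∀ ω, 0 ≤ Y ω) {C : ℝ} (hC : ∀ ω, |Y ω| ≤ C)
    (hInt : ∫ ω, Y ω ∂μ = 1) {X : α → E} (hX : Measurable X) :
    IsProbabilityMeasure ((μ.withDensity fun ω => ENNReal.ofReal (Y ω)).map X) := by
  constructor
  rw [Measure.map_apply hX MeasurableSet.univ]
  simp only [Set.preimage_univ]
  rw [withDensity_apply _ MeasurableSet.univ, Measure.restrict_univ,
    ← ofReal_integral_eq_lintegral_ofReal
      (integrable_of_bdd hY.aestronglyMeasurable hC) (ae_of_all _ hY0), hInt]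
  simp


lemma key {Ω Ω' E : Type*} [MeasurableSpace Ω] [MeasurableSpace Ω']
    [MetricSpace E] [MeasurableSpace E] [BorelSpace E]
    (P : Measure Ω) [IsProbabilityMeasure P] (P' : Measure Ω') [IsProbabilityMeasure P']
    {X : ℕ → Ω → E} (hX : ∀ n, Measurable (X n))
    {Z : Ω' → E} (hZ : Measurable Z)
    {Y : Ω → ℝ} (hY : Measurable Y) (hY0 : ∀ ω, 0 ≤ Y ω) {C : ℝ} (hC : ∀ ω, |Y ω| ≤ C)
    (hY1 : ∫ ω, Y ω ∂P = 1)
    {Y' : Ω' → ℝ} (hY' : Measurable Y') (hY'0 : ∀ ω, 0 ≤ Y' ω) {C' : ℝ} (hC' : ∀ ω, |Y' ω| ≤ C')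
    (hY'1 : ∫ ω, Y' ω ∂P' = 1)
    (hop : ∀ U : Set E, IsOpen U →
      ∫ p, Set.indicator U (fun _ => (1:ℝ)) (Z p) * Y' p ∂P'
        ≤ atTop.liminf fun n => ∫ ω, Set.indicator U (fun _ => (1:ℝ)) (X n ω) * Y ω ∂P)
    {f : E → ℝ} (hf : Continuous f) {Cf : ℝ} (hCf : ∀ x, |f x| ≤ Cf) :
    Tendsto (fun n => ∫ ω, f (X n ω) * Y ω ∂P) atTop (𝓝 (∫ p, f (Z p) * Y' p ∂P')) := by
  set μs : ℕ → Measure E := fun n => (P.withDensity fun ω => ENNReal.ofReal (Y ω)).map (X n)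
    with hμs_def
  set μ : Measure E := (P'.withDensity fun ω => ENNReal.ofReal (Y' ω)).map Z with hμ_def
  haveI hμs : ∀ n, IsProbabilityMeasure (μs n) := fun n => isProb_wd hY hY0 hC hY1 (hX n)
  haveI hμ : IsProbabilityMeasure μ := isProb_wd hY' hY'0 hC' hY'1 hZ
  have h_opens : ∀ G, IsOpen G → μ G ≤ atTop.liminf fun i => μs i G := by
    intro U hU
    have h1 : (μ U).toReal ≤ atTop.liminf fun n => ((μs n) U).toReal := by
      have e1 : (fun n => ((μs n) U).toReal)
          = fun n => ∫ ω, Set.indicator U (fun _ => (1:ℝ)) (X n ω) * Y ω ∂P := by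
        funext n; exact measure_wd hY hY0 (hX n) hU.measurableSet
      rw [e1, measure_wd hY' hY'0 hZ hU.measurableSet]
      exact hop U hU
    have hb : ∀ n, μs n U ≤ 1 := fun n => prob_le_one
    have e2 : atTop.liminf (fun n => ((μs n) U).toReal)
        = (atTop.liminf fun n => μs n U).toReal :=
      ENNReal.liminf_toReal_eq ENNReal.one_ne_top (Eventually.of_forall hb)
    rw [e2] at h1
    have hlt : atTop.liminf (fun n => μs n U) ≤ 1 :=
      le_trans (Filter.liminf_le_liminf (Eventually.of_forall hb)) (by simp)
    rw [← ENNReal.ofReal_toReal (show μ U ≠ ⊤ from (measure_lt_top μ U).ne),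
      ← ENNReal.ofReal_toReal (show atTop.liminf (fun n => μs n U) ≠ ⊤ from
        (lt_of_le_of_lt hlt ENNReal.one_lt_top).ne)]
    exact ENNReal.ofReal_le_ofReal h1
  set fb : BoundedContinuousFunction E ℝ :=
    BoundedContinuousFunction.ofNormedAddCommGroup f hf Cf
      (fun x => by simpa [Real.norm_eq_abs] using hCf x) with hfb_def
  have main := BoundedContinuousFunction.tendsto_integral_of_forall_integral_le_liminf_integral
    (μ := μ) (μs := μs) (L := atTop)
    (fun g hg => integral_le_liminf_integral_of_forall_isOpen_measure_le_liminf_measure hg h_opens)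
    fb
  have hcoe : ∀ x, fb x = f x := fun x => rfl
  have e3 : (fun n => ∫ x, fb x ∂(μs n)) = fun n => ∫ ω, f (X n ω) * Y ω ∂P := by
    funext n
    simp only [hcoe]
    exact integral_wd hY hY0 (hX n) hf.measurable
  have e4 : ∫ x, fb x ∂μ = ∫ p, f (Z p) * Y' p ∂P' := by
    simp only [hcoe]
    exact integral_wd hY' hY'0 hZ hf.measurable
  rw [e3, e4] at main
  exact main


lemma step4to1 {Ω Ω₀ E : Type*} (G : MeasurableSpace Ω)
    [mΩ : MeasurableSpace Ω] [MeasurableSpace Ω₀]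
    [MetricSpace E] [MeasurableSpace E] [BorelSpace E]
    (P : Measure Ω) [IsProbabilityMeasure P]
    (Phat : Measure (Ω × Ω₀)) [IsProbabilityMeasure Phat]
    (hext : Phat.map Prod.fst = P) (hG : G ≤ mΩ)
    (X : ℕ → Ω → E) (hX : ∀ n, Measurable (X n))
    (Xl : Ω × Ω₀ → E) (hXl : Measurable Xl)
    (h4 : ∀ U : Set E, IsOpen U →
        ∀ Y : Ω → ℝ, Measurable[G] Y → (∃ C, ∀ ω, |Y ω| ≤ C) → (∀ ω, 0 ≤ Y ω) →
        ∫ p, Set.indicator U (fun _ => (1:ℝ)) (Xl p) * Y p.1 ∂Phat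
          ≤ Filter.liminf
              (fun n => ∫ ω, Set.indicator U (fun _ => (1:ℝ)) (X n ω) * Y ω ∂P) atTop)
    {f : E → ℝ} (hf : Continuous f) {Cf : ℝ} (hCf : ∀ x, |f x| ≤ Cf)
    {Y : Ω → ℝ} (hY : Measurable[G] Y) {C : ℝ} (hC : ∀ ω, |Y ω| ≤ C) :
    Tendsto (fun n => ∫ ω, f (X n ω) * Y ω ∂P) atTop
      (𝓝 (∫ p, f (Xl p) * Y p.1 ∂Phat)) := by
  have hfst : ∀ (g : Ω → ℝ), Measurable g → ∫ p, g p.1 ∂Phat = ∫ ω, g ω ∂P := by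
    intro g hg
    conv_rhs => rw [← hext]
    rw [integral_map measurable_fst.aemeasurable hg.aestronglyMeasurable]
  have main : ∀ (W : Ω → ℝ) (D : ℝ), Measurable[G] W → (∀ ω, 0 ≤ W ω) → (∀ ω, |W ω| ≤ D) →
      Tendsto (fun n => ∫ ω, f (X n ω) * W ω ∂P) atTop
        (𝓝 (∫ p, f (Xl p) * W p.1 ∂Phat)) := by
    intro W D hWG hW0 hWC
    have hWm : Measurable W := hWG.mono hG le_rfl
    have hWint : Integrable W P := integrable_of_bdd hWm.aestronglyMeasurable hWC
    set c := ∫ ω, W ω ∂P with hc_def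
    have hc0 : 0 ≤ c := integral_nonneg hW0
    rcases eq_or_lt_of_le hc0 with hc | hc
    · have hW_ae : W =ᵐ[P] 0 := (integral_eq_zero_iff_of_nonneg hW0 hWint).mp hc.symm
      have h1 : ∀ n, ∫ ω, f (X n ω) * W ω ∂P = 0 := by
        intro n
        have h : (fun ω => f (X n ω) * W ω) =ᵐ[P] 0 := hW_ae.mono fun ω h => by
          simp only [Pi.zero_apply] at h ⊢; simp [h]
        rw [integral_congr_ae h]; simp
      have hWfst_int : Integrable (fun p : Ω × Ω₀ => W p.1) Phat :=
        integrable_of_bdd (g := fun p : Ω × Ω₀ => W p.1)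
          (hWm.comp measurable_fst).aestronglyMeasurable (fun p => hWC p.1)
      have h2 : ∫ p, W p.1 ∂Phat = 0 := by rw [hfst W hWm]; exact hc.symm
      have hW_ae' : (fun p : Ω × Ω₀ => W p.1) =ᵐ[Phat] 0 :=
        (integral_eq_zero_iff_of_nonneg (fun (p : Ω × Ω₀) => hW0 p.1) hWfst_int).mp h2
      have h3 : ∫ p, f (Xl p) * W p.1 ∂Phat = 0 := by
        have h : (fun p : Ω × Ω₀ => f (Xl p) * W p.1) =ᵐ[Phat] 0 := hW_ae'.mono fun p h => by
          simp only [Pi.zero_apply] at h ⊢; simp [h]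
        rw [integral_congr_ae h]; simp
      simp only [h1, h3]
      exact tendsto_const_nhds
    · have hcne : c ≠ 0 := hc.ne'
      have hWCd : ∀ ω, |W ω / c| ≤ D / c := by
        intro ω
        rw [abs_div, abs_of_pos hc]
        gcongr
        exact hWC ω
      have hW1 : ∫ ω, W ω / c ∂P = 1 := by
        rw [integral_div, ← hc_def, div_self hcne]
      have hW'1 : ∫ p, (fun q : Ω × Ω₀ => W q.1 / c) p ∂Phat = 1 := by
        rw [hfst (fun ω => W ω / c) (hWm.div_const c)]; exact hW1
      have hop : ∀ U : Set E, IsOpen U →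
          ∫ p, Set.indicator U (fun _ => (1:ℝ)) (Xl p) * (fun q : Ω × Ω₀ => W q.1 / c) p ∂Phat
            ≤ atTop.liminf fun n =>
              ∫ ω, Set.indicator U (fun _ => (1:ℝ)) (X n ω) * (W ω / c) ∂P := by
        intro U hU
        exact h4 U hU (fun ω => W ω / c) (hWG.div_const c) ⟨D / c, hWCd⟩
          (fun ω => div_nonneg (hW0 ω) hc0)
      have hkey := key (Y := fun ω => W ω / c) (Y' := fun q : Ω × Ω₀ => W q.1 / c)
        P Phat hX hXl (hWm.div_const c)
        (fun ω => div_nonneg (hW0 ω) hc0) hWCd hW1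
        ((hWm.comp measurable_fst).div_const c)
        (fun p => div_nonneg (hW0 p.1) hc0) (fun p => hWCd p.1) hW'1 hop hf hCf
      have hmul := hkey.const_mul c
      have e1 : (fun n => c * ∫ ω, f (X n ω) * (W ω / c) ∂P)
          = fun n => ∫ ω, f (X n ω) * W ω ∂P := by
        funext n
        rw [← integral_const_mul]
        congr 1; funext ω
        field_simp
      have e2 : c * ∫ p, f (Xl p) * (fun q : Ω × Ω₀ => W q.1 / c) p ∂Phat
          = ∫ p, f (Xl p) * W p.1 ∂Phat := by
        rw [← integral_const_mul]
        congr 1; funext p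
        field_simp
      rw [e1, e2] at hmul
      exact hmul
  have hintP : ∀ (n : ℕ) (W : Ω → ℝ) (D : ℝ), Measurable W → (∀ ω, |W ω| ≤ D) →
      Integrable (fun ω => f (X n ω) * W ω) P := by
    intro n W D hW hD
    refine integrable_of_bdd (g := fun ω => f (X n ω) * W ω)
      ((hf.measurable.comp (hX n)).mul hW).aestronglyMeasurable (C := Cf * D) (fun ω => ?_)
    rw [abs_mul]
    exact mul_le_mul (hCf _) (hD ω) (abs_nonneg _) ((abs_nonneg _).trans (hCf (X n ω)))
  have hintQ : ∀ (W : Ω → ℝ) (D : ℝ), Measurable W → (∀ ω, |W ω| ≤ D) →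
      Integrable (fun p : Ω × Ω₀ => f (Xl p) * W p.1) Phat := by
    intro W D hW hD
    refine integrable_of_bdd (g := fun p : Ω × Ω₀ => f (Xl p) * W p.1)
      ((hf.measurable.comp hXl).mul (hW.comp measurable_fst)).aestronglyMeasurable
      (C := Cf * D) (fun p => ?_)
    rw [abs_mul]
    exact mul_le_mul (hCf _) (hD p.1) (abs_nonneg _) ((abs_nonneg _).trans (hCf (Xl p)))
  have hYm : Measurable Y := hY.mono hG le_rfl
  have hboundp : ∀ ω, |max (Y ω) 0| ≤ max C 0 := fun ω => by
    rw [abs_of_nonneg (le_max_right _ _)]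
    exact max_le_max (abs_le.mp (hC ω)).2 le_rfl
  have hboundm : ∀ ω, |max (-Y ω) 0| ≤ max C 0 := fun ω => by
    rw [abs_of_nonneg (le_max_right _ _)]
    refine max_le_max ?_ le_rfl
    have := (abs_le.mp (hC ω)).1
    linarith
  have hp := main (fun ω => max (Y ω) 0) (max C 0) (hY.max measurable_const)
    (fun ω => le_max_right _ _) hboundp
  have hm := main (fun ω => max (-Y ω) 0) (max C 0) (hY.neg.max measurable_const)
    (fun ω => le_max_right _ _) hboundm
  have hsub := hp.sub hm
  have eℕ : ∀ n, (∫ ω, f (X n ω) * max (Y ω) 0 ∂P)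
        - (∫ ω, f (X n ω) * max (-Y ω) 0 ∂P)
      = ∫ ω, f (X n ω) * Y ω ∂P := by
    intro n
    rw [← integral_sub (hintP n _ (max C 0) (hYm.max measurable_const) hboundp)
      (hintP n (fun ω => max (-Y ω) 0) (max C 0) (hYm.neg.max measurable_const) hboundm)]
    congr 1; funext ω
    rw [← mul_sub, max_zero_sub_max_neg_zero_eq_self]
  have eL : (∫ p, f (Xl p) * max (Y p.1) 0 ∂Phat)
        - (∫ p, f (Xl p) * max (-Y p.1) 0 ∂Phat)
      = ∫ p, f (Xl p) * Y p.1 ∂Phat := by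
    rw [← integral_sub (hintQ _ (max C 0) (hYm.max measurable_const) hboundp)
      (hintQ (fun ω => max (-Y ω) 0) (max C 0) (hYm.neg.max measurable_const) hboundm)]
    congr 1; funext p
    rw [← mul_sub, max_zero_sub_max_neg_zero_eq_self]
  rw [← eL]
  exact Tendsto.congr (fun n => eℕ n) hsub


lemma step2to3 {Ω Ω₀ E : Type*} (G : MeasurableSpace Ω)
    [mΩ : MeasurableSpace Ω] [MeasurableSpace Ω₀]
    [MetricSpace E] [MeasurableSpace E] [BorelSpace E]
    (P : Measure Ω) [IsProbabilityMeasure P]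
    (Phat : Measure (Ω × Ω₀)) [IsProbabilityMeasure Phat]
    (hG : G ≤ mΩ)
    (X : ℕ → Ω → E) (hX : ∀ n, Measurable (X n))
    (Xl : Ω × Ω₀ → E) (hXl : Measurable Xl)
    (h2 : ∀ f : E → ℝ, UniformContinuous f → (∃ C, ∀ x, |f x| ≤ C) →
        ∀ Y : Ω → ℝ, Measurable[G] Y → (∃ C, ∀ ω, |Y ω| ≤ C) →
        Tendsto (fun n => ∫ ω, f (X n ω) * Y ω ∂P) atTop
          (𝓝 (∫ p, f (Xl p) * Y p.1 ∂Phat)))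
    (F : Set E) (hF : IsClosed F)
    (Y : Ω → ℝ) (hY : Measurable[G] Y) {C : ℝ} (hC : ∀ ω, |Y ω| ≤ C) (hY0 : ∀ ω, 0 ≤ Y ω) :
    Filter.limsup
      (fun n => ∫ ω, Set.indicator F (fun _ => (1:ℝ)) (X n ω) * Y ω ∂P) atTop
      ≤ ∫ p, Set.indicator F (fun _ => (1:ℝ)) (Xl p) * Y p.1 ∂Phat := by
  rcases Set.eq_empty_or_nonempty F with rfl | hFne
  · simp [Filter.limsup_const]
  have hYm : Measurable Y := hY.mono hG le_rfl
  -- the approximating functions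
  set g : ℕ → E → ℝ := fun m x => max (1 - (m:ℝ) * Metric.infDist x F) 0 with hg_def
  have hgUC : ∀ m, UniformContinuous (g m) := by
    intro m
    have l2 : LipschitzWith (Real.nnabs (m:ℝ)) (fun d : ℝ => 1 - (m:ℝ) * d) := by
      apply LipschitzWith.of_dist_le_mul
      intro x y
      have : dist (1 - (m:ℝ)*x) (1 - (m:ℝ)*y) = |(m:ℝ)| * dist x y := by
        rw [Real.dist_eq, Real.dist_eq,
          show (1 - (m:ℝ)*x) - (1 - (m:ℝ)*y) = (m:ℝ)*(y-x) from by ring,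
          abs_mul, abs_sub_comm y x]
      rw [this, Real.coe_nnabs]
    exact (((LipschitzWith.id.max_const 0).comp l2).comp
      (Metric.lipschitz_infDist_pt F)).uniformContinuous
  have hg0 : ∀ m x, 0 ≤ g m x := fun m x => le_max_right _ _
  have hg1 : ∀ m x, g m x ≤ 1 := by
    intro m x
    apply max_le _ zero_le_one
    have : 0 ≤ (m:ℝ) * Metric.infDist x F :=
      mul_nonneg (Nat.cast_nonneg m) Metric.infDist_nonneg
    linarith
  have hgb : ∀ m x, |g m x| ≤ 1 := fun m x => by
    rw [abs_of_nonneg (hg0 m x)]; exact hg1 m x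
  have hind_le : ∀ m x, Set.indicator F (fun _ => (1:ℝ)) x ≤ g m x := by
    intro m x
    by_cases hx : x ∈ F
    · rw [Set.indicator_of_mem hx, hg_def]
      simp [Metric.infDist_zero_of_mem hx]
    · rw [Set.indicator_of_notMem hx]
      exact hg0 m x
  have hindb : ∀ (x : E), |Set.indicator F (fun _ => (1:ℝ)) x| ≤ 1 := by
    intro x
    by_cases hx : x ∈ F
    · simp [Set.indicator_of_mem hx]
    · simp [Set.indicator_of_notMem hx]
  have hintP : ∀ (n : ℕ) (h : E → ℝ), Measurable h → (∀ x, |h x| ≤ 1) →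
      Integrable (fun ω => h (X n ω) * Y ω) P := by
    intro n h hh hhb
    refine integrable_of_bdd (g := fun ω => h (X n ω) * Y ω)
      ((hh.comp (hX n)).mul hYm).aestronglyMeasurable (C := C) (fun ω => ?_)
    rw [abs_mul]
    calc |h (X n ω)| * |Y ω| ≤ 1 * |Y ω| :=
          mul_le_mul_of_nonneg_right (hhb _) (abs_nonneg _)
      _ = |Y ω| := one_mul _
      _ ≤ C := hC ω
  have hconv := fun m => h2 (g m) (hgUC m) ⟨1, hgb m⟩ Y hY ⟨C, hC⟩
  set u : ℕ → ℝ := fun n => ∫ ω, Set.indicator F (fun _ => (1:ℝ)) (X n ω) * Y ω ∂P with hu_def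
  have hu_bdd : atTop.IsBoundedUnder (· ≥ ·) u :=
    isBoundedUnder_of ⟨0, fun n => integral_nonneg fun ω =>
      mul_nonneg (Set.indicator_nonneg (fun _ _ => zero_le_one) _) (hY0 ω)⟩
  have hstep : ∀ m, atTop.limsup u ≤ ∫ p, g m (Xl p) * Y p.1 ∂Phat := by
    intro m
    have hle : ∀ n, u n ≤ ∫ ω, g m (X n ω) * Y ω ∂P := by
      intro n
      refine integral_mono
        (hintP n _ (measurable_const.indicator hF.measurableSet) hindb)
        (hintP n _ (hgUC m).continuous.measurable (hgb m)) (fun ω => ?_)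
      exact mul_le_mul_of_nonneg_right (hind_le m _) (hY0 ω)
    have hv_bdd : atTop.IsBoundedUnder (· ≤ ·) (fun n => ∫ ω, g m (X n ω) * Y ω ∂P) := by
      refine isBoundedUnder_of ⟨C, fun n => ?_⟩
      refine le_of_abs_le (abs_integral_le_of_bdd (fun ω => ?_))
      rw [abs_mul]
      calc |g m (X n ω)| * |Y ω| ≤ 1 * |Y ω| :=
            mul_le_mul_of_nonneg_right (hgb m _) (abs_nonneg _)
        _ ≤ C := by rw [one_mul]; exact hC ω
    calc atTop.limsup u
        ≤ atTop.limsup (fun n => ∫ ω, g m (X n ω) * Y ω ∂P) :=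
          limsup_le_limsup (Eventually.of_forall hle)
            hu_bdd.isCoboundedUnder_le hv_bdd
      _ = ∫ p, g m (Xl p) * Y p.1 ∂Phat := (hconv m).limsup_eq
  -- dominated convergence in m
  have hDCT : Tendsto (fun m => ∫ p, g m (Xl p) * Y p.1 ∂Phat) atTop
      (𝓝 (∫ p, Set.indicator F (fun _ => (1:ℝ)) (Xl p) * Y p.1 ∂Phat)) := by
    refine tendsto_integral_of_dominated_convergence (fun _ => C)
      (fun m => (((hgUC m).continuous.measurable.comp hXl).mul
        (hYm.comp measurable_fst)).aestronglyMeasurable)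
      (integrable_const C)
      (fun m => ae_of_all _ fun p => ?_) (ae_of_all _ fun p => ?_)
    · rw [Real.norm_eq_abs, abs_mul]
      calc |g m (Xl p)| * |Y p.1| ≤ 1 * |Y p.1| :=
            mul_le_mul_of_nonneg_right (hgb m _) (abs_nonneg _)
        _ ≤ C := by rw [one_mul]; exact hC p.1
    · by_cases hx : Xl p ∈ F
      · have : ∀ m, g m (Xl p) * Y p.1
            = Set.indicator F (fun _ => (1:ℝ)) (Xl p) * Y p.1 := by
          intro m
          rw [Set.indicator_of_mem hx, hg_def]
          simp [Metric.infDist_zero_of_mem hx]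
        simp only [this]
        exact tendsto_const_nhds
      · have hd : 0 < Metric.infDist (Xl p) F :=
          (hF.notMem_iff_infDist_pos hFne).mp hx
        rw [Set.indicator_of_notMem hx, zero_mul]
        have hev : ∀ᶠ m : ℕ in atTop, g m (Xl p) * Y p.1 = 0 := by
          filter_upwards [eventually_ge_atTop ⌈1 / Metric.infDist (Xl p) F⌉₊] with m hm
          have h1 : (1:ℝ) / Metric.infDist (Xl p) F ≤ (m:ℝ) :=
            le_trans (Nat.le_ceil _) (Nat.cast_le.mpr hm)
          have h2 : (1:ℝ) ≤ (m:ℝ) * Metric.infDist (Xl p) F := by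
            have := mul_le_mul_of_nonneg_right h1 hd.le
            rwa [one_div, inv_mul_cancel₀ hd.ne'] at this
          have : g m (Xl p) = 0 := by
            rw [hg_def]
            simp only
            rw [max_eq_right (by linarith)]
          rw [this, zero_mul]
        exact Tendsto.congr' (hev.mono fun m h => h.symm) tendsto_const_nhds
  exact ge_of_tendsto hDCT (Eventually.of_forall hstep)


lemma step3to4 {Ω Ω₀ E : Type*} (G : MeasurableSpace Ω)
    [mΩ : MeasurableSpace Ω] [MeasurableSpace Ω₀]
    [MetricSpace E] [MeasurableSpace E] [BorelSpace E]
    (P : Measure Ω) [IsProbabilityMeasure P]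
    (Phat : Measure (Ω × Ω₀)) [IsProbabilityMeasure Phat]
    (hext : Phat.map Prod.fst = P) (hG : G ≤ mΩ)
    (X : ℕ → Ω → E) (hX : ∀ n, Measurable (X n))
    (Xl : Ω × Ω₀ → E) (hXl : Measurable Xl)
    (h3 : ∀ F : Set E, IsClosed F →
        ∀ Y : Ω → ℝ, Measurable[G] Y → (∃ C, ∀ ω, |Y ω| ≤ C) → (∀ ω, 0 ≤ Y ω) →
        Filter.limsup
          (fun n => ∫ ω, Set.indicator F (fun _ => (1:ℝ)) (X n ω) * Y ω ∂P) atTop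
          ≤ ∫ p, Set.indicator F (fun _ => (1:ℝ)) (Xl p) * Y p.1 ∂Phat)
    (U : Set E) (hU : IsOpen U)
    (Y : Ω → ℝ) (hY : Measurable[G] Y) {C : ℝ} (hC : ∀ ω, |Y ω| ≤ C) (hY0 : ∀ ω, 0 ≤ Y ω) :
    ∫ p, Set.indicator U (fun _ => (1:ℝ)) (Xl p) * Y p.1 ∂Phat
      ≤ Filter.liminf
          (fun n => ∫ ω, Set.indicator U (fun _ => (1:ℝ)) (X n ω) * Y ω ∂P) atTop := by
  have hYm : Measurable Y := hY.mono hG le_rfl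
  have hYint : Integrable Y P := integrable_of_bdd hYm.aestronglyMeasurable hC
  have hindb : ∀ (S : Set E) (x : E), |Set.indicator S (fun _ => (1:ℝ)) x| ≤ 1 := by
    intro S x
    by_cases hx : x ∈ S
    · simp [Set.indicator_of_mem hx]
    · simp [Set.indicator_of_notMem hx]
  have hintP : ∀ (n : ℕ) (S : Set E), MeasurableSet S →
      Integrable (fun ω => Set.indicator S (fun _ => (1:ℝ)) (X n ω) * Y ω) P := by
    intro n S hS
    refine integrable_of_bdd (g := fun ω => Set.indicator S (fun _ => (1:ℝ)) (X n ω) * Y ω)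
      (((measurable_const.indicator hS).comp (hX n)).mul hYm).aestronglyMeasurable
      (C := C) (fun ω => ?_)
    rw [abs_mul]
    calc |Set.indicator S (fun _ => (1:ℝ)) (X n ω)| * |Y ω| ≤ 1 * |Y ω| :=
          mul_le_mul_of_nonneg_right (hindb S _) (abs_nonneg _)
      _ ≤ C := by rw [one_mul]; exact hC ω
  have hintQ : ∀ (S : Set E), MeasurableSet S →
      Integrable (fun p : Ω × Ω₀ => Set.indicator S (fun _ => (1:ℝ)) (Xl p) * Y p.1) Phat := by
    intro S hS
    refine integrable_of_bdd
      (g := fun p : Ω × Ω₀ => Set.indicator S (fun _ => (1:ℝ)) (Xl p) * Y p.1)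
      (((measurable_const.indicator hS).comp hXl).mul (hYm.comp measurable_fst)).aestronglyMeasurable
      (C := C) (fun p => ?_)
    rw [abs_mul]
    calc |Set.indicator S (fun _ => (1:ℝ)) (Xl p)| * |Y p.1| ≤ 1 * |Y p.1| :=
          mul_le_mul_of_nonneg_right (hindb S _) (abs_nonneg _)
      _ ≤ C := by rw [one_mul]; exact hC p.1
  have hYfst_int : Integrable (fun p : Ω × Ω₀ => Y p.1) Phat :=
    integrable_of_bdd (g := fun p : Ω × Ω₀ => Y p.1)
      (hYm.comp measurable_fst).aestronglyMeasurable (fun p => hC p.1)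
  set c := ∫ ω, Y ω ∂P with hc_def
  have hcc : ∫ p, Y p.1 ∂Phat = c := by
    rw [hc_def]
    conv_rhs => rw [← hext]
    rw [integral_map measurable_fst.aemeasurable hYm.aestronglyMeasurable]
  have hsplit : ∀ x : E, Set.indicator U (fun _ => (1:ℝ)) x
      + Set.indicator Uᶜ (fun _ => (1:ℝ)) x = 1 := by
    intro x
    by_cases hx : x ∈ U
    · simp [Set.indicator_of_mem hx, Set.indicator_of_notMem (by simpa using hx : x ∉ Uᶜ)]
    · simp [Set.indicator_of_notMem hx, Set.indicator_of_mem (by simpa using hx : x ∈ Uᶜ)]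
  have e1 : ∀ n, ∫ ω, Set.indicator U (fun _ => (1:ℝ)) (X n ω) * Y ω ∂P
      = c - ∫ ω, Set.indicator Uᶜ (fun _ => (1:ℝ)) (X n ω) * Y ω ∂P := by
    intro n
    rw [eq_sub_iff_add_eq, ← integral_add (hintP n U hU.measurableSet)
      (hintP n Uᶜ hU.measurableSet.compl), hc_def]
    congr 1; funext ω
    rw [← add_mul, hsplit, one_mul]
  have e2 : ∫ p, Set.indicator U (fun _ => (1:ℝ)) (Xl p) * Y p.1 ∂Phat
      = c - ∫ p, Set.indicator Uᶜ (fun _ => (1:ℝ)) (Xl p) * Y p.1 ∂Phat := by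
    rw [eq_sub_iff_add_eq, ← integral_add (hintQ U hU.measurableSet)
      (hintQ Uᶜ hU.measurableSet.compl), ← hcc]
    congr 1; funext p
    rw [← add_mul, hsplit, one_mul]
  set a : ℕ → ℝ := fun n => ∫ ω, Set.indicator Uᶜ (fun _ => (1:ℝ)) (X n ω) * Y ω ∂P
    with ha_def
  have ha_bdd : atTop.IsBoundedUnder (· ≤ ·) a := by
    refine isBoundedUnder_of ⟨C, fun n => ?_⟩
    refine le_of_abs_le (abs_integral_le_of_bdd (fun ω => ?_))
    rw [abs_mul]
    calc |Set.indicator Uᶜ (fun _ => (1:ℝ)) (X n ω)| * |Y ω| ≤ 1 * |Y ω| :=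
          mul_le_mul_of_nonneg_right (hindb _ _) (abs_nonneg _)
      _ ≤ C := by rw [one_mul]; exact hC ω
  have ha_cobdd : atTop.IsCoboundedUnder (· ≤ ·) a :=
    (isBoundedUnder_of ⟨0, fun n => integral_nonneg fun ω =>
      mul_nonneg (Set.indicator_nonneg (fun _ _ => zero_le_one) _) (hY0 ω)⟩ :
        atTop.IsBoundedUnder (· ≥ ·) a).isCoboundedUnder_le
  have hlim : Filter.liminf
      (fun n => ∫ ω, Set.indicator U (fun _ => (1:ℝ)) (X n ω) * Y ω ∂P) atTop
      = c - atTop.limsup a := by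
    have : (fun n => ∫ ω, Set.indicator U (fun _ => (1:ℝ)) (X n ω) * Y ω ∂P)
        = fun n => c - a n := funext e1
    rw [this]
    exact liminf_const_sub atTop a c ha_bdd ha_cobdd
  rw [hlim, e2]
  have := h3 Uᶜ (isClosed_compl_iff.mpr hU) Y hY ⟨C, hC⟩ hY0
  exact sub_le_sub_left this c

end StableAux


/-- Portmanteau theorem for `G`-stable convergence in law (Lemma 2.2). -/
theorem stmt0 {Ω Ω₀ E : Type*} (G : MeasurableSpace Ω)
    [mΩ : MeasurableSpace Ω] [MeasurableSpace Ω₀]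
    [MetricSpace E] [MeasurableSpace E] [BorelSpace E]
    (P : Measure Ω) [IsProbabilityMeasure P]
    (Phat : Measure (Ω × Ω₀)) [IsProbabilityMeasure Phat]
    (hext : Phat.map Prod.fst = P)
    (hG : G ≤ mΩ)
    (X : ℕ → Ω → E) (hX : ∀ n, Measurable (X n))
    (Xl : Ω × Ω₀ → E) (hXl : Measurable Xl) :
    List.TFAE [
      (∀ f : E → ℝ, Continuous f → (∃ C, ∀ x, |f x| ≤ C) →
        ∀ Y : Ω → ℝ, Measurable[G] Y → (∃ C, ∀ ω, |Y ω| ≤ C) →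
        Tendsto (fun n => ∫ ω, f (X n ω) * Y ω ∂P) atTop
          (𝓝 (∫ p, f (Xl p) * Y p.1 ∂Phat))),
      (∀ f : E → ℝ, UniformContinuous f → (∃ C, ∀ x, |f x| ≤ C) →
        ∀ Y : Ω → ℝ, Measurable[G] Y → (∃ C, ∀ ω, |Y ω| ≤ C) →
        Tendsto (fun n => ∫ ω, f (X n ω) * Y ω ∂P) atTop
          (𝓝 (∫ p, f (Xl p) * Y p.1 ∂Phat))),
      (∀ F : Set E, IsClosed F →
        ∀ Y : Ω → ℝ, Measurable[G] Y → (∃ C, ∀ ω, |Y ω| ≤ C) → (∀ ω, 0 ≤ Y ω) →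
        Filter.limsup
          (fun n => ∫ ω, Set.indicator F (fun _ => (1:ℝ)) (X n ω) * Y ω ∂P) atTop
          ≤ ∫ p, Set.indicator F (fun _ => (1:ℝ)) (Xl p) * Y p.1 ∂Phat),
      (∀ U : Set E, IsOpen U →
        ∀ Y : Ω → ℝ, Measurable[G] Y → (∃ C, ∀ ω, |Y ω| ≤ C) → (∀ ω, 0 ≤ Y ω) →
        ∫ p, Set.indicator U (fun _ => (1:ℝ)) (Xl p) * Y p.1 ∂Phat
          ≤ Filter.liminf
              (fun n => ∫ ω, Set.indicator U (fun _ => (1:ℝ)) (X n ω) * Y ω ∂P) atTop)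
    ] := by 
  tfae_have 1 → 2 := fun h1 f hf hb => h1 f hf.continuous hb
  tfae_have 2 → 3 := by
    intro h2 F hF Y hY hYb hY0
    obtain ⟨C, hC⟩ := hYb
    exact StableAux.step2to3 G P Phat hG X hX Xl hXl h2 F hF Y hY hC hY0
  tfae_have 3 → 4 := by
    intro h3 U hU Y hY hYb hY0
    obtain ⟨C, hC⟩ := hYb
    exact StableAux.step3to4 G P Phat hext hG X hX Xl hXl h3 U hU Y hY hC hY0
  tfae_have 4 → 1 := by
    intro h4 f hf hfb Y hY hYb
    obtain ⟨Cf, hCf⟩ := hfb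
    obtain ⟨C, hC⟩ := hYb
    exact StableAux.step4to1 G P Phat hext hG X hX Xl hXl h4 hf hCf hY hC
  tfae_finish
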